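/- Radon's theorem for ordered factor hyperfields: let H = F/U be an ordered factor hyperfield and p₁, ..., p_{d+2} ∈ H^d. Then there exists a point q ∈ H^d and a nonempty proper subset I ⊊ {1, ..., d+2} such that q ∈ conv(pᵢ : i ∈ I) ∩ conv(pⱼ : j ∉ I). -/

import Mathlib

/-- The data of a hyperfield: a multivalued addition, multiplication,
negation, zero and one. -/
structure HyperfieldData (H : Type*) where
  hadd : H → H → Set H
  mul : H → H → H
  neg : H → H
  zero : H
  one : H

/-- The hyperfield axioms. -/
structure IsHyperfield {H : Type*} (D : HyperfieldData H) : Prop where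
  hadd_nonempty : ∀ a b, (D.hadd a b).Nonempty
  hadd_comm : ∀ a b, D.hadd a b = D.hadd b a
  hadd_assoc : ∀ a b c, (⋃ x ∈ D.hadd a b, D.hadd x c) = ⋃ y ∈ D.hadd b c, D.hadd a y
  zero_hadd : ∀ a, D.hadd D.zero a = {a}
  neg_mem : ∀ a, D.zero ∈ D.hadd a (D.neg a)
  neg_unique : ∀ a b, D.zero ∈ D.hadd a b → b = D.neg a
  reverse : ∀ a b c, a ∈ D.hadd b c ↔ c ∈ D.hadd a (D.neg b)
  mul_comm : ∀ a b, D.mul a b = D.mul b a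
  mul_assoc : ∀ a b c, D.mul (D.mul a b) c = D.mul a (D.mul b c)
  one_mul : ∀ a, D.mul D.one a = a
  mul_inv : ∀ a, a ≠ D.zero → ∃ b, D.mul a b = D.one
  zero_mul : ∀ a, D.mul D.zero a = D.zero
  distrib : ∀ a b c, D.mul a '' D.hadd b c = D.hadd (D.mul a b) (D.mul a c)
  zero_ne_one : D.zero ≠ D.one

/-- An ordering on a hyperfield: a set of positive elements closed under
hyperaddition and multiplication such that `H = P ⊔ {0} ⊔ (-P)`. -/
def IsOrdering {H : Type*} (D : HyperfieldData H) (P : Set H) : Prop :=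
  (∀ a ∈ P, ∀ b ∈ P, D.hadd a b ⊆ P) ∧
  (∀ a ∈ P, ∀ b ∈ P, D.mul a b ∈ P) ∧
  (∀ x : H, x ∈ P ∨ x = D.zero ∨ x ∈ D.neg '' P) ∧
  D.zero ∉ P ∧ D.zero ∉ D.neg '' P ∧ Disjoint P (D.neg '' P)

/-- A hyperfield homomorphism. -/
def IsHom {H1 H2 : Type*} (D1 : HyperfieldData H1) (D2 : HyperfieldData H2)
    (f : H1 → H2) : Prop :=
  (∀ a b, f '' D1.hadd a b ⊆ D2.hadd (f a) (f b)) ∧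
  (∀ a b, f (D1.mul a b) = D2.mul (f a) (f b)) ∧
  f D1.one = D2.one ∧ f D1.zero = D2.zero

/-- The iterated hypersum of a finite list of elements. -/
def listSum {H : Type*} (D : HyperfieldData H) : List H → Set H
  | [] => {D.zero}
  | x :: xs => ⋃ s ∈ listSum D xs, D.hadd x s

/-- The coordinatewise set `a ⊙ p ⊞ b ⊙ q ⊆ H^ι`. -/
def combo {H ι : Type*} (D : HyperfieldData H) (a b : H) (p q : ι → H) : Set (ι → H) :=
  {r | ∀ i, r i ∈ D.hadd (D.mul a (p i)) (D.mul b (q i))}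

/-- A convex subset of `H^ι`. -/
def IsConvexSet {H ι : Type*} (D : HyperfieldData H) (P : Set H) (S : Set (ι → H)) : Prop :=
  ∀ p ∈ S, ∀ q ∈ S, ∀ a ∈ P, ∀ b ∈ P, D.one ∈ D.hadd a b → combo D a b p q ⊆ S

/-- A conic subset of `H^ι`. -/
def IsConicSet {H ι : Type*} (D : HyperfieldData H) (P : Set H) (S : Set (ι → H)) : Prop :=
  ∀ p ∈ S, ∀ q ∈ S, ∀ a ∈ P, ∀ b ∈ P, combo D a b p q ⊆ S

/-- Membership in the convex hull of `T`: `q` lies in some finite convex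
combination of points of `T` (repetition allowed). -/
def InConv {H ι : Type*} (D : HyperfieldData H) (P : Set H) (T : Set (ι → H))
    (q : ι → H) : Prop :=
  ∃ l : List (H × (ι → H)), l ≠ [] ∧ (∀ x ∈ l, x.1 ∈ P ∧ x.2 ∈ T) ∧
    D.one ∈ listSum D (l.map Prod.fst) ∧
    ∀ i, q i ∈ listSum D (l.map fun x => D.mul x.1 (x.2 i))

/-- Membership in the conic hull of `T`. -/
def InCone {H ι : Type*} (D : HyperfieldData H) (P : Set H) (T : Set (ι → H))
    (q : ι → H) : Prop :=
  ∃ l : List (H × (ι → H)), l ≠ [] ∧ (∀ x ∈ l, x.1 ∈ P ∧ x.2 ∈ T) ∧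
    ∀ i, q i ∈ listSum D (l.map fun x => D.mul x.1 (x.2 i))

/-- The setoid on `F` whose classes are the cosets of the multiplicative
subgroup `U ⊆ Fˣ`. -/
def factorSetoid {F : Type*} [Field F] (U : Subgroup Fˣ) : Setoid F where
  r a b := ∃ u : Fˣ, u ∈ U ∧ b = a * u
  iseqv := ⟨fun a => ⟨1, U.one_mem, by simp⟩,
    fun {a b} h => by
      obtain ⟨u, hu, rfl⟩ := h
      exact ⟨u⁻¹, U.inv_mem hu, by rw [mul_assoc]; simp⟩,
    fun {a b c} h1 h2 => by
      obtain ⟨u, hu, rfl⟩ := h1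
      obtain ⟨v, hv, rfl⟩ := h2
      exact ⟨u * v, U.mul_mem hu hv, by rw [Units.val_mul, mul_assoc]⟩⟩

/-- The underlying set of the factor hyperfield `F/U`. -/
abbrev FQuot {F : Type*} [Field F] (U : Subgroup Fˣ) := Quotient (factorSetoid U)

/-- The quotient map `τ : F → F/U`. -/
def tauF {F : Type*} [Field F] (U : Subgroup Fˣ) : F → FQuot U :=
  Quotient.mk (factorSetoid U)

/-- The hyperfield data of the factor hyperfield `F/U`. -/
noncomputable def factorData {F : Type*} [Field F] (U : Subgroup Fˣ) :
    HyperfieldData (FQuot U) where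
  hadd x y := {z | ∃ a b : F, tauF U a = x ∧ tauF U b = y ∧ tauF U (a + b) = z}
  mul x y := tauF U (Quotient.out x * Quotient.out y)
  neg x := tauF U (-(Quotient.out x))
  zero := tauF U 0
  one := tauF U 1


section Aux
variable {F : Type*} [Field F] (U : Subgroup Fˣ)

lemma tau_out (x : FQuot U) : tauF U x.out = x := Quotient.out_eq x

lemma tau_rel (a : F) : ∃ u : Fˣ, u ∈ U ∧ (tauF U a).out = a * u := by
  obtain ⟨u, hu, hab⟩ := Quotient.exact (tau_out U (tauF U a))
  refine ⟨u⁻¹, U.inv_mem hu, ?_⟩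
  set o := (tauF U a).out with ho
  rw [hab, mul_assoc, ← Units.val_mul, mul_inv_cancel, Units.val_one, mul_one]

lemma tau_mul (a b : F) :
    (factorData U).mul (tauF U a) (tauF U b) = tauF U (a * b) := by
  obtain ⟨u, hu, ha⟩ := tau_rel U a
  obtain ⟨v, hv, hb⟩ := tau_rel U b
  show tauF U ((tauF U a).out * (tauF U b).out) = tauF U (a * b)
  refine (Quotient.sound ?_).symm
  refine ⟨u * v, U.mul_mem hu hv, ?_⟩
  rw [ha, hb, Units.val_mul]; ring

lemma tau_sum (xs : List F) :
    tauF U xs.sum ∈ listSum (factorData U) (xs.map (tauF U)) := by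
  induction xs with
  | nil => simp [listSum, factorData]
  | cons x xs ih =>
    simp only [List.map_cons, listSum, List.sum_cons]
    exact Set.mem_biUnion ih ⟨x, xs.sum, rfl, rfl, rfl⟩

end Aux

lemma inconv_key {F : Type*} [Field F] [LinearOrder F] [IsStrictOrderedRing F] (U : Subgroup Fˣ)
    {d n : ℕ} (w : Fin n → F) (S : Finset (Fin n)) (hS : S.Nonempty)
    (hposw : ∀ i ∈ S, 0 < w i) (hsum : ∑ i ∈ S, w i = 1)
    (pts : Fin n → Fin d → FQuot U) (T : Set (Fin d → FQuot U))
    (hT : ∀ i ∈ S, pts i ∈ T) :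
    InConv (factorData U) (tauF U '' {x : F | 0 < x}) T
      (fun k => tauF U (∑ i ∈ S, w i * (pts i k).out)) := by
  refine ⟨S.toList.map (fun i => (tauF U (w i), pts i)), ?_, ?_, ?_, ?_⟩
  · simp [Finset.toList_eq_nil, hS.ne_empty]
  · rintro x hx
    obtain ⟨i, hi, rfl⟩ := List.mem_map.mp hx
    rw [Finset.mem_toList] at hi
    exact ⟨⟨w i, hposw i hi, rfl⟩, hT i hi⟩
  · have h1 : (S.toList.map (fun i => (tauF U (w i), pts i))).map Prod.fst
        = (S.toList.map w).map (tauF U) := by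
      simp [List.map_map, Function.comp]
    rw [h1]
    have h2 : (S.toList.map w).sum = 1 := by
      rw [Finset.sum_map_toList]; exact hsum
    have h3 := tau_sum U (S.toList.map w)
    rw [h2] at h3
    exact h3
  · intro k
    have h1 : (S.toList.map (fun i => (tauF U (w i), pts i))).map
          (fun x => (factorData U).mul x.1 (x.2 k))
        = (S.toList.map (fun i => w i * (pts i k).out)).map (tauF U) := by
      simp only [List.map_map]
      refine List.map_congr_left (fun i _ => ?_)
      simp only [Function.comp_apply]
      show (factorData U).mul (tauF U (w i)) (pts i k) = tauF U (w i * (pts i k).out)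
      conv_lhs => rw [← tau_out U (pts i k)]
      rw [tau_mul]
    rw [h1]
    have h2 : (S.toList.map (fun i => w i * (pts i k).out)).sum
        = ∑ i ∈ S, w i * (pts i k).out := Finset.sum_map_toList _ _
    have h3 := tau_sum U (S.toList.map (fun i => w i * (pts i k).out))
    rw [h2] at h3
    exact h3
/-- Radon's theorem for ordered factor hyperfields. -/
theorem stmt16 {F : Type*} [Field F] [LinearOrder F] [IsStrictOrderedRing F] (U : Subgroup Fˣ)
    (hU : ∀ u : Fˣ, u ∈ U → (0 : F) < (u : F)) {d : ℕ}
    (p : Fin (d + 2) → (Fin d → FQuot U)) :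
    ∃ (q : Fin d → FQuot U) (I : Set (Fin (d + 2))), I.Nonempty ∧ I ≠ Set.univ ∧
      InConv (factorData U) (tauF U '' {x : F | 0 < x}) (p '' I) q ∧
      InConv (factorData U) (tauF U '' {x : F | 0 < x}) (p '' Iᶜ) q := by
  classical
  set Prep : Fin (d + 2) → Fin d → F := fun i k => (p i k).out with hPrep
  set v : Fin (d + 2) → (Fin d → F) × F := fun i => (Prep i, 1) with hv
  have hdep : ¬ LinearIndependent F v := by
    intro h
    have := h.fintype_card_le_finrank
    simp [Module.finrank_prod, Module.finrank_pi] at this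
  obtain ⟨c, hc, i0, hi0⟩ := Fintype.not_linearIndependent_iff.mp hdep
  have hcsum : ∑ i, c i = 0 := by
    have := congrArg Prod.snd hc
    simpa [Prod.snd_sum, hv] using this
  have hcpt : ∀ k, ∑ i, c i * Prep i k = 0 := by
    intro k
    have := congrArg (fun x => x.1 k) hc
    simpa [Prod.fst_sum, hv] using this
  have hexpos : ∃ i, 0 < c i := by
    by_contra h; push_neg at h
    exact hi0 ((Finset.sum_eq_zero_iff_of_nonpos (fun i _ => h i)).mp hcsum i0
      (Finset.mem_univ i0))
  have hexneg : ∃ i, c i < 0 := by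
    by_contra h; push_neg at h
    exact hi0 ((Finset.sum_eq_zero_iff_of_nonneg (fun i _ => h i)).mp hcsum i0
      (Finset.mem_univ i0))
  set Pos : Finset (Fin (d + 2)) := Finset.univ.filter (fun i => 0 < c i) with hPosdef
  set Neg : Finset (Fin (d + 2)) := Finset.univ.filter (fun i => c i < 0) with hNegdef
  have hPosne : Pos.Nonempty := by
    obtain ⟨i, hi⟩ := hexpos
    exact ⟨i, by simp [hPosdef, hi]⟩
  have hNegne : Neg.Nonempty := by
    obtain ⟨i, hi⟩ := hexneg
    exact ⟨i, by simp [hNegdef, hi]⟩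
  set s : F := ∑ i ∈ Pos, c i with hsdef
  have hs : 0 < s :=
    Finset.sum_pos (fun i hi => (Finset.mem_filter.mp hi).2) hPosne
  -- general splitting fact
  have hsplit : ∀ f : Fin (d + 2) → F, (∀ i, c i = 0 → f i = 0) → (∑ i, f i = 0) →
      ∑ i ∈ Pos, f i = ∑ i ∈ Neg, -f i := by
    intro f hf0 hf
    have h1 : ∑ i ∈ Finset.univ.filter (fun i => 0 < c i), f i
        + ∑ i ∈ Finset.univ.filter (fun i => ¬ 0 < c i), f i = 0 := by
      rw [Finset.sum_filter_add_sum_filter_not]; exact hf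
    have h2 : ∑ i ∈ Finset.univ.filter (fun i => ¬ 0 < c i), f i
        = ∑ i ∈ Neg, f i := by
      refine (Finset.sum_subset ?_ ?_).symm
      · intro x hx
        simp only [hNegdef, Finset.mem_filter, Finset.mem_univ, true_and] at hx ⊢
        exact not_lt.mpr hx.le
      · intro x hx hnx
        simp only [hNegdef, Finset.mem_filter, Finset.mem_univ, true_and,
          not_lt] at hx hnx
        exact hf0 x (le_antisymm hx hnx)
    rw [h2] at h1
    rw [Finset.sum_neg_distrib]
    linarith [h1]
  have hnegsum : ∑ i ∈ Neg, -c i = s := by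
    have := hsplit c (fun i h => h) hcsum
    rw [hsdef, this]
  have hcoord : ∀ k, ∑ i ∈ Pos, c i * Prep i k = ∑ i ∈ Neg, -c i * Prep i k := by
    intro k
    have := hsplit (fun i => c i * Prep i k) (fun i h => by simp [h]) (hcpt k)
    rw [this]
    congr 1; ext i; ring
  have hsumP : ∑ i ∈ Pos, c i / s = 1 := by
    rw [← Finset.sum_div, ← hsdef, div_self hs.ne']
  have hsumN : ∑ i ∈ Neg, -c i / s = 1 := by
    rw [← Finset.sum_div, hnegsum, div_self hs.ne']
  refine ⟨fun k => tauF U (∑ i ∈ Pos, (c i / s) * Prep i k), ↑Pos, ?_, ?_, ?_, ?_⟩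
  · exact ⟨hPosne.choose, hPosne.choose_spec⟩
  · intro h
    obtain ⟨j, hj⟩ := hNegne
    have hjneg : c j < 0 := (Finset.mem_filter.mp hj).2
    have : j ∈ (↑Pos : Set (Fin (d + 2))) := h ▸ Set.mem_univ j
    have : 0 < c j := (Finset.mem_filter.mp this).2
    linarith
  · exact inconv_key U (fun i => c i / s) Pos hPosne
      (fun i hi => div_pos (Finset.mem_filter.mp hi).2 hs) hsumP p _
      (fun i hi => ⟨i, hi, rfl⟩)
  · have key := inconv_key U (fun i => -c i / s) Neg hNegne
      (fun i hi => div_pos (neg_pos.mpr (Finset.mem_filter.mp hi).2) hs) hsumN p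
      (p '' (↑Pos : Set (Fin (d + 2)))ᶜ)
      (fun i hi => ⟨i, fun hmem => absurd (Finset.mem_filter.mp hmem).2
        (not_lt.mpr (Finset.mem_filter.mp hi).2.le), rfl⟩)
    convert key using 2 with k
    have : ∑ i ∈ Pos, c i / s * Prep i k = ∑ i ∈ Neg, -c i / s * Prep i k := by
      have h1 : ∀ (S : Finset (Fin (d+2))) (g : Fin (d+2) → F),
          ∑ i ∈ S, g i / s * Prep i k = (∑ i ∈ S, g i * Prep i k) / s := by
        intro S g
        rw [Finset.sum_div]
        refine Finset.sum_congr rfl fun i _ => ?_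
        ring
      rw [h1 Pos c, h1 Neg (fun i => -c i), hcoord k]
    rw [this]
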